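/- Let F be a Furstenberg family and let π : (X,T) → (Y,S) be a factor map between topological dynamical systems. Then: (1) if x ∈ X is F-product recurrent, then π(x) is F-product recurrent; (2) if x is π-distal and π(x) is F-product recurrent, then x is F-product recurrent; (3) in particular, if π⁻¹(π(x)) = {x} and π(x) is F-product recurrent, then x is F-product recurrent. -/

import Mathlib

open Set Filter Topology Function

namespace PaperFormal

/-- The return-time set `N(x,U) = {n ∈ ℤ₊ : Tⁿ x ∈ U}`. -/
def retTimes {X : Type} (T : X → X) (x : X) (U : Set X) : Set ℕ :=
  {n : ℕ | T^[n] x ∈ U}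

/-- A point is recurrent if `N(x,U)` is infinite for every neighborhood `U` of `x`. -/
def RecurrentPt {X : Type} [TopologicalSpace X] (T : X → X) (x : X) : Prop :=
  ∀ U ∈ nhds x, (retTimes T x U).Infinite

/-- The (forward) orbit closure of a point. -/
def orbitClosure {X : Type} [TopologicalSpace X] (T : X → X) (x : X) : Set X :=
  closure (Set.range fun n : ℕ => T^[n] x)

/-- A pair `(x,y)` is proximal if `lim T^{nᵢ} x = lim T^{nᵢ} y` along some sequence `nᵢ`. -/
def ProximalPair {X : Type} [TopologicalSpace X] (T : X → X) (x y : X) : Prop :=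
  ∃ (u : ℕ → ℕ) (z : X),
    Tendsto (fun i => T^[u i] x) atTop (nhds z) ∧
    Tendsto (fun i => T^[u i] y) atTop (nhds z)

/-- A point `x` is distal if every `y` in its orbit closure proximal to `x` equals `x`. -/
def DistalPt {X : Type} [TopologicalSpace X] (T : X → X) (x : X) : Prop :=
  ∀ y ∈ orbitClosure T x, ProximalPair T x y → y = x

/-- `A` is a minimal set: nonempty, closed, invariant, with no proper such subset. -/
def IsMinimalSet {X : Type} [TopologicalSpace X] (T : X → X) (A : Set X) : Prop :=
  A.Nonempty ∧ IsClosed A ∧ Set.MapsTo T A A ∧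
    ∀ B ⊆ A, B.Nonempty → IsClosed B → Set.MapsTo T B B → B = A

/-- A point is minimal (almost periodic) if its orbit closure is a minimal set. -/
def IsMinimalPt {X : Type} [TopologicalSpace X] (T : X → X) (x : X) : Prop :=
  IsMinimalSet T (orbitClosure T x)

/-- A minimal system: no proper nonempty closed invariant subset. -/
def MinimalSys {X : Type} [TopologicalSpace X] (T : X → X) : Prop :=
  ∀ B : Set X, B.Nonempty → IsClosed B → Set.MapsTo T B B → B = Set.univ

/-- A transitive system: `N(U,V)` is infinite for all opene `U`, `V`. -/
def TransitiveSys {X : Type} [TopologicalSpace X] (T : X → X) : Prop :=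
  ∀ U V : Set X, IsOpen U → IsOpen V → U.Nonempty → V.Nonempty →
    {n : ℕ | (U ∩ T^[n] ⁻¹' V).Nonempty}.Infinite

/-- Transitivity of the subsystem on an invariant subset `A` (relative open sets). -/
def TransitiveOn {X : Type} [TopologicalSpace X] (T : X → X) (A : Set X) : Prop :=
  ∀ U V : Set X, IsOpen U → IsOpen V → (U ∩ A).Nonempty → (V ∩ A).Nonempty →
    {n : ℕ | (U ∩ A ∩ T^[n] ⁻¹' V).Nonempty}.Infinite

/-- A transitive point: a point with dense forward orbit. -/
def TransPt {X : Type} [TopologicalSpace X] (T : X → X) (x : X) : Prop :=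
  Dense (Set.range fun n : ℕ => T^[n] x)

/-- Finite sums of the sequence `p` over nonempty finite index sets contained in `[n,∞)`. -/
def FSfrom (p : ℕ → ℕ) (n : ℕ) : Set ℕ :=
  {m | ∃ α : Finset ℕ, α.Nonempty ∧ (∀ i ∈ α, n ≤ i) ∧ m = ∑ i ∈ α, p i}

/-- Finite sums of the sequence `p` over nonempty finite index sets. -/
def FS (p : ℕ → ℕ) : Set ℕ := FSfrom p 0

/-- An IP set: a set containing all finite sums of some sequence of natural numbers. -/
def IPSet (A : Set ℕ) : Prop :=
  ∃ p : ℕ → ℕ, (∀ i, 0 < p i) ∧ FS p ⊆ A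

/-- An IP* set: a set meeting every IP set. -/
def IPStar (A : Set ℕ) : Prop :=
  ∀ B : Set ℕ, IPSet B → (A ∩ B).Nonempty

/-- A syndetic set: a set with bounded gaps. -/
def Syndetic (S : Set ℕ) : Prop :=
  ∃ N : ℕ, ∀ m : ℕ, ∃ k ∈ S, m ≤ k ∧ k ≤ m + N

/-- A thick set: a set containing arbitrarily long runs of consecutive integers. -/
def Thick (S : Set ℕ) : Prop :=
  ∀ n : ℕ, ∃ m : ℕ, ∀ i ≤ n, m + i ∈ S

/-- A piecewise syndetic set: an intersection of a syndetic set with a thick set. -/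
def PiecewiseSyndetic (A : Set ℕ) : Prop :=
  ∃ S₁ S₂ : Set ℕ, Syndetic S₁ ∧ Thick S₂ ∧ A = S₁ ∩ S₂

/-- A thickly syndetic set: a set meeting every piecewise syndetic set. -/
def ThicklySyndetic (A : Set ℕ) : Prop :=
  ∀ B : Set ℕ, PiecewiseSyndetic B → (A ∩ B).Nonempty

/-- `x` is `F`-recurrent for the family `F` if `N(x,U) ∈ F` for every neighborhood `U`. -/
def FRecurrentPt {X : Type} [TopologicalSpace X] (F : Set (Set ℕ)) (T : X → X) (x : X) :
    Prop :=
  ∀ U ∈ nhds x, retTimes T x U ∈ F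

/-- `x` is `F`-product recurrent: `(x,y)` is recurrent for every `F`-recurrent point `y`
in any topological dynamical system `(Y,S)`. -/
def FProductRecurrent {X : Type} [TopologicalSpace X] (F : Set (Set ℕ)) (T : X → X)
    (x : X) : Prop :=
  ∀ (Y : Type) [MetricSpace Y] [CompactSpace Y] (S : Y → Y),
    Continuous S → Function.Surjective S →
      ∀ y : Y, FRecurrentPt F S y → RecurrentPt (Prod.map T S) (x, y)

/-- A joining of `(X,T)` and `(Y,S)`: a nonempty closed invariant subset of `X × Y`
projecting onto both coordinates. -/
def Joining {X Y : Type} [TopologicalSpace X] [TopologicalSpace Y]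
    (T : X → X) (S : Y → Y) (J : Set (X × Y)) : Prop :=
  J.Nonempty ∧ IsClosed J ∧ Set.MapsTo (Prod.map T S) J J ∧
    Prod.fst '' J = Set.univ ∧ Prod.snd '' J = Set.univ

/-- Two systems are disjoint if their only joining is the full product. -/
def DisjointSys {X Y : Type} [TopologicalSpace X] [TopologicalSpace Y]
    (T : X → X) (S : Y → Y) : Prop :=
  ∀ J : Set (X × Y), Joining T S J → J = Set.univ

/-- Property (★) of a point: for each neighborhood `V` of `x` there is `n` such that for
every finite set `S` whose distinct elements are at distance `≥ n`, some common shift `ℓ`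
puts all of `T^{s+ℓ} x`, `s ∈ S`, inside `V`. -/
def StarProp {X : Type} [TopologicalSpace X] (T : X → X) (x : X) : Prop :=
  ∀ V ∈ nhds x, ∃ n : ℕ, ∀ S : Finset ℕ,
    (∀ s ∈ S, ∀ t ∈ S, s < t → n ≤ t - s) →
      ∃ ℓ : ℕ, ∀ s ∈ S, T^[s + ℓ] x ∈ V

/-- `F` is an independence set for the pair `(U₀, U₁)`. -/
def IndepSet {X : Type} (T : X → X) (U₀ U₁ : Set X) (F : Set ℕ) : Prop :=
  ∀ J : Finset ℕ, ↑J ⊆ F → J.Nonempty → ∀ s : ℕ → Bool,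
    (⋂ j ∈ J, T^[j] ⁻¹' (if s j then U₁ else U₀)).Nonempty

/- ### Auxiliary material for statement 14 -/

lemma aux_infinite_of_unbounded {A : Set ℕ} (h : ∀ m : ℕ, ∃ n, m ≤ n ∧ n ∈ A) :
    A.Infinite := by
  by_contra hfin
  rw [Set.not_infinite] at hfin
  obtain ⟨b, hb⟩ := hfin.bddAbove
  obtain ⟨n, hn, hnA⟩ := h (b + 1)
  exact absurd (hb hnA) (by omega)

/-- Generating set for the Ellis-type semigroup: iterates `Φ^[n]` with `n ≥ m`. -/
def Egen {W : Type} (Φ : W → W) (m : ℕ) : Set (W → W) :=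
  {g | ∃ n, m ≤ n ∧ g = Φ^[n]}

/-- Closure of the iterates `Φ^[n]`, `n ≥ m`, in the product topology. -/
def Ecl {W : Type} [TopologicalSpace W] (Φ : W → W) (m : ℕ) : Set (W → W) :=
  closure (Egen Φ m)

lemma Ecl_subset_of_closed {W : Type} [TopologicalSpace W] {Φ : W → W} {m : ℕ}
    {C : Set (W → W)} (hC : IsClosed C) (h : ∀ n, m ≤ n → Φ^[n] ∈ C) :
    Ecl Φ m ⊆ C := by
  apply closure_minimal _ hC
  rintro g ⟨n, hn, rfl⟩
  exact h n hn

lemma iterate_mem_Ecl {W : Type} [TopologicalSpace W] (Φ : W → W) {m n : ℕ}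
    (h : m ≤ n) : Φ^[n] ∈ Ecl Φ m :=
  subset_closure ⟨n, h, rfl⟩

lemma comp_mem_Ecl {W : Type} [TopologicalSpace W] {Φ : W → W} (hΦ : Continuous Φ)
    {m : ℕ} {p q : W → W} (hp : p ∈ Ecl Φ 0) (hq : q ∈ Ecl Φ m) :
    p ∘ q ∈ Ecl Φ m := by
  have hstep : ∀ n : ℕ, Φ^[n] ∘ q ∈ Ecl Φ m := by
    intro n
    have hL : Continuous fun r : W → W => Φ^[n] ∘ r :=
      continuous_pi fun w => (hΦ.iterate n).comp (continuous_apply w)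
    have h1 : Φ^[n] ∘ q ∈ (fun r : W → W => Φ^[n] ∘ r) '' closure (Egen Φ m) :=
      ⟨q, hq, rfl⟩
    have h2 := image_closure_subset_closure_image (s := Egen Φ m) hL h1
    refine closure_mono ?_ h2
    rintro _ ⟨g, ⟨k, hk, rfl⟩, rfl⟩
    exact ⟨n + k, le_trans hk (Nat.le_add_left _ _), (Function.iterate_add Φ n k).symm⟩
  have hR : Continuous fun r : W → W => r ∘ q :=
    continuous_pi fun w => continuous_apply (q w)
  have h1 : p ∘ q ∈ (fun r : W → W => r ∘ q) '' closure (Egen Φ 0) := ⟨p, hp, rfl⟩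
  have h2 := image_closure_subset_closure_image (s := Egen Φ 0) hR h1
  have h3 : (fun r : W → W => r ∘ q) '' Egen Φ 0 ⊆ Ecl Φ m := by
    rintro _ ⟨g, ⟨n, -, rfl⟩, rfl⟩
    exact hstep n
  exact closure_minimal h3 isClosed_closure h2

/-- Key lemma: if `(π x, z)` is recurrent under `S × R`, then there is `x'` in the fibre
of `π x` proximal to `x` such that `(x', z)` is recurrent under `T × R`. -/
lemma key_lemma {X Y Z : Type} [MetricSpace X] [CompactSpace X]
    [MetricSpace Y] [CompactSpace Y] [MetricSpace Z] [CompactSpace Z]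
    (T : X → X) (hTc : Continuous T) (S : Y → Y) (hSc : Continuous S)
    (R : Z → Z) (hRc : Continuous R)
    (π : X → Y) (hπc : Continuous π) (hsemi : ∀ a : X, π (T a) = S (π a))
    (x : X) (z : Z) (hrec : RecurrentPt (Prod.map S R) (π x, z)) :
    ∃ x' : X, π x' = π x ∧ ProximalPair T x' x ∧
      RecurrentPt (Prod.map T R) (x', z) := by
  classical
  set W := X × (Y × Z) with hWdef
  set Φ : W → W := Prod.map T (Prod.map S R) with hΦdef
  have hΦc : Continuous Φ := hTc.prodMap (hSc.prodMap hRc)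
  set w : W := (x, (π x, z)) with hwdef
  -- iterates of Φ computed coordinatewise
  have hit : ∀ (n : ℕ) (v : W),
      Φ^[n] v = (T^[n] v.1, (S^[n] v.2.1, R^[n] v.2.2)) := by
    intro n v
    rw [hΦdef, Prod.map_iterate, Prod.map_iterate]
    rfl
  have hsemiIt : ∀ (n : ℕ) (a : X), π (T^[n] a) = S^[n] (π a) := by
    intro n a
    exact (Function.Semiconj.iterate_right hsemi n) a
  -- positive scales
  have hpos : ∀ m : ℕ, (0 : ℝ) < 1 / (m + 1) := by
    intro m; positivity
  -- the decreasing family of closed sets giving a point of `G`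
  set A : ℕ → Set (W → W) := fun m =>
    closure {g | ∃ n, m ≤ n ∧ g = Φ^[n] ∧ dist ((Φ^[n] w).2) w.2 ≤ 1 / (m + 1)}
    with hAdef
  have hAne : ∀ m, (A m).Nonempty := by
    intro m
    have hball := hrec (Metric.ball (π x, z) (1 / (m + 1)))
      (Metric.ball_mem_nhds _ (hpos m))
    obtain ⟨n, hnA, hmn⟩ := hball.exists_gt m
    refine ⟨Φ^[n], subset_closure ⟨n, hmn.le, rfl, ?_⟩⟩
    have h2 : (Φ^[n] w).2 = (Prod.map S R)^[n] (π x, z) := by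
      rw [hit]; simp [Prod.map_iterate, Prod.map, hwdef]
    rw [h2]
    have : (Prod.map S R)^[n] (π x, z) ∈ Metric.ball (π x, z) (1 / (m + 1)) := hnA
    simpa [hwdef] using (Metric.mem_ball.mp this).le
  have hAdec : ∀ m, A (m + 1) ⊆ A m := by
    intro m
    apply closure_mono
    rintro g ⟨n, hn, rfl, hd⟩
    refine ⟨n, by omega, rfl, le_trans hd ?_⟩
    apply one_div_le_one_div_of_le (by positivity)
    push_cast; linarith
  have hAcl : ∀ m, IsClosed (A m) := fun m => isClosed_closure
  obtain ⟨p, hp⟩ := IsCompact.nonempty_iInter_of_sequence_nonempty_isCompact_isClosed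
    A hAdec hAne ((hAcl 0).isCompact) hAcl
  simp only [Set.mem_iInter] at hp
  have hpE : ∀ m, p ∈ Ecl Φ m := by
    intro m
    refine closure_mono ?_ (hp m)
    rintro g ⟨n, hn, rfl, -⟩
    exact ⟨n, hn, rfl⟩
  have hp2 : (p w).2 = w.2 := by
    have hdle : ∀ m : ℕ, dist ((p w).2) w.2 ≤ 1 / (m + 1) := by
      intro m
      have hcl : IsClosed {g : W → W | dist ((g w).2) w.2 ≤ 1 / (m + 1)} :=
        isClosed_le (Continuous.dist ((continuous_apply w).snd) continuous_const)
          continuous_const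
      have hsub : A m ⊆ {g : W → W | dist ((g w).2) w.2 ≤ 1 / (m + 1)} := by
        apply closure_minimal _ hcl
        rintro g ⟨n, hn, rfl, hd⟩
        exact hd
      exact hsub (hp m)
    have h0 : dist ((p w).2) w.2 ≤ 0 :=
      ge_of_tendsto' tendsto_one_div_add_atTop_nhds_zero_nat hdle
    exact dist_le_zero.mp h0
  -- the dependence fact: second component of `g (a, w.2)` does not depend on `a`
  have hdep : ∀ g ∈ Ecl Φ 0, ∀ a a' : X, (g (a, w.2)).2 = (g (a', w.2)).2 := by
    intro g hg a a'
    have hcl : IsClosed {h : W → W | (h (a, w.2)).2 = (h (a', w.2)).2} :=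
      isClosed_eq ((continuous_apply ((a, w.2) : W)).snd)
        ((continuous_apply ((a', w.2) : W)).snd)
    refine Ecl_subset_of_closed hcl (fun n _ => ?_) hg
    show (Φ^[n] (a, w.2)).2 = (Φ^[n] (a', w.2)).2
    rw [hit, hit]
  -- the subsemigroup G
  set G : Set (W → W) := {g | (∀ m, g ∈ Ecl Φ m) ∧ (g w).2 = w.2} with hGdef
  have hGne : G.Nonempty := ⟨p, hpE, hp2⟩
  have hGclosed : IsClosed G := by
    have : G = (⋂ m, Ecl Φ m) ∩ {g : W → W | (g w).2 = w.2} := by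
      ext g; simp [hGdef, Set.mem_iInter]
    rw [this]
    exact IsClosed.inter (isClosed_iInter fun m => isClosed_closure)
      (isClosed_eq ((continuous_apply w).snd) continuous_const)
  have hGcompact : IsCompact G := hGclosed.isCompact
  letI : Mul (W → W) := ⟨fun f g => f ∘ g⟩
  letI : Semigroup (W → W) := { mul_assoc := fun _ _ _ => rfl }
  have hmulcont : ∀ r : W → W, Continuous (· * r) := fun r =>
    continuous_pi fun v => continuous_apply (r v)
  have hGmul : ∀ f ∈ G, ∀ g ∈ G, f * g ∈ G := by
    intro f hf g hg
    constructor
    · intro m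
      exact comp_mem_Ecl hΦc (hf.1 0) (hg.1 m)
    · have hgw : g w = ((g w).1, w.2) := by rw [← hg.2]
      have h1 : ((f * g) w).2 = (f ((g w).1, w.2)).2 := by
        show (f (g w)).2 = _
        rw [← hgw]
      rw [h1, hdep f (hf.1 0) (g w).1 x]
      exact hf.2
  obtain ⟨u, huG, huid⟩ :=
    exists_idempotent_in_compact_subsemigroup hmulcont G hGne hGcompact hGmul
  -- the point x' and the auxiliary point w'
  set x' : X := (u w).1 with hx'def
  have hu2 : (u w).2 = w.2 := huG.2
  set w' : W := (x', w.2) with hw'def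
  have hw'uw : w' = u w := by rw [hw'def, hx'def, ← hu2]
  have huw' : u w' = w' := by
    rw [hw'uw]
    exact congrFun huid w
  -- π x' = π x
  have hπx' : π x' = π x := by
    have hcl : IsClosed {g : W → W | π ((g w).1) = (g w).2.1} :=
      isClosed_eq (hπc.comp ((continuous_apply w).fst))
        (((continuous_apply w).snd).fst)
    have hmem : u ∈ {g : W → W | π ((g w).1) = (g w).2.1} := by
      refine Ecl_subset_of_closed hcl (fun n _ => ?_) (huG.1 0)
      show π ((Φ^[n] w).1) = (Φ^[n] w).2.1
      rw [hit]
      exact hsemiIt n x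
    have : π x' = (u w).2.1 := hmem
    rw [this, hu2]
  -- recurrence of (x', z)
  have hrec' : RecurrentPt (Prod.map T R) (x', z) := by
    intro U hU
    obtain ⟨V, hVU, hVopen, hVmem⟩ := mem_nhds_iff.mp hU
    apply aux_infinite_of_unbounded
    intro m
    have hO : IsOpen {g : W → W | (((g w').1 : X), ((g w').2.2 : Z)) ∈ V} :=
      hVopen.preimage
        (((continuous_apply w').fst).prodMk (((continuous_apply w').snd).snd))
    have huO : u ∈ {g : W → W | (((g w').1 : X), ((g w').2.2 : Z)) ∈ V} := by
      show ((u w').1, (u w').2.2) ∈ V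
      rw [huw']
      exact hVmem
    obtain ⟨g, hgO, n, hmn, rfl⟩ :=
      mem_closure_iff.mp (huG.1 m) _ hO huO
    refine ⟨n, hmn, ?_⟩
    have hcalc : (Prod.map T R)^[n] (x', z) = ((Φ^[n] w').1, (Φ^[n] w').2.2) := by
      rw [hit]
      simp [Prod.map_iterate, Prod.map, hw'def, hwdef]
    show (Prod.map T R)^[n] (x', z) ∈ U
    rw [hcalc]
    exact hVU hgO
  -- proximality of x' and x
  have hprox : ProximalPair T x' x := by
    have hchoice : ∀ i : ℕ, ∃ n : ℕ,
        dist (T^[n] x') x' < 1 / (i + 1) ∧ dist (T^[n] x) x' < 1 / (i + 1) := by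
      intro i
      have hO : IsOpen {g : W → W |
          dist ((g w').1) x' < 1 / (i + 1) ∧ dist ((g w).1) x' < 1 / (i + 1)} := by
        apply IsOpen.inter
        · exact isOpen_lt (Continuous.dist ((continuous_apply w').fst)
            continuous_const) continuous_const
        · exact isOpen_lt (Continuous.dist ((continuous_apply w).fst)
            continuous_const) continuous_const
      have huO : u ∈ {g : W → W |
          dist ((g w').1) x' < 1 / (i + 1) ∧ dist ((g w).1) x' < 1 / (i + 1)} := by
        constructor
        · rw [huw']
          simpa [hw'def] using hpos i
        · simpa [hx'def] using hpos i
      obtain ⟨g, hgO, n, -, rfl⟩ := mem_closure_iff.mp (huG.1 0) _ hO huO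
      refine ⟨n, ?_, ?_⟩
      · have := hgO.1
        rwa [hit] at this
      · have := hgO.2
        rwa [hit] at this
    choose ν hν1 hν2 using hchoice
    refine ⟨ν, x', ?_, ?_⟩
    · rw [tendsto_iff_dist_tendsto_zero]
      exact squeeze_zero (fun i => dist_nonneg) (fun i => (hν1 i).le)
        tendsto_one_div_add_atTop_nhds_zero_nat
    · rw [tendsto_iff_dist_tendsto_zero]
      exact squeeze_zero (fun i => dist_nonneg) (fun i => (hν2 i).le)
        tendsto_one_div_add_atTop_nhds_zero_nat
  exact ⟨x', hπx', hprox, hrec'⟩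

/-- behaviour of `F`-product recurrence under a factor map `π`. -/
theorem statement_14 {X Y : Type} [MetricSpace X] [CompactSpace X]
    [MetricSpace Y] [CompactSpace Y]
    (F : Set (Set ℕ)) (hF : ∀ A B : Set ℕ, A ∈ F → A ⊆ B → B ∈ F)
    (T : X → X) (hTc : Continuous T) (hTs : Function.Surjective T)
    (S : Y → Y) (hSc : Continuous S) (hSs : Function.Surjective S)
    (π : X → Y) (hπc : Continuous π) (hπs : Function.Surjective π)
    (hsemi : ∀ x : X, π (T x) = S (π x)) :
    (∀ x : X, FProductRecurrent F T x → FProductRecurrent F S (π x)) ∧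
      (∀ x : X, (∀ x' : X, ProximalPair T x' x → π x' = π x → x' = x) →
        FProductRecurrent F S (π x) → FProductRecurrent F T x) ∧
      (∀ x : X, π ⁻¹' {π x} = {x} →
        FProductRecurrent F S (π x) → FProductRecurrent F T x) := by
  have hsemiIt : ∀ (n : ℕ) (a : X), π (T^[n] a) = S^[n] (π a) := by
    intro n a
    exact (Function.Semiconj.iterate_right hsemi n) a
  have h2 : ∀ x : X, (∀ x' : X, ProximalPair T x' x → π x' = π x → x' = x) →
      FProductRecurrent F S (π x) → FProductRecurrent F T x := by
    intro x hdist hfpr Z _ _ R hRc hRs z hz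
    have hrec : RecurrentPt (Prod.map S R) (π x, z) := hfpr Z R hRc hRs z hz
    obtain ⟨x', hπx', hprox, hrec'⟩ :=
      key_lemma T hTc S hSc R hRc π hπc hsemi x z hrec
    have hx'x : x' = x := hdist x' hprox hπx'
    rwa [hx'x] at hrec'
  refine ⟨?_, h2, ?_⟩
  · intro x hx Z _ _ R hRc hRs z hz U hU
    have hq : Continuous (Prod.map π (id : Z → Z)) := hπc.prodMap continuous_id
    have heval : Prod.map π (id : Z → Z) (x, z) = (π x, z) := rfl
    have hpre : Prod.map π (id : Z → Z) ⁻¹' U ∈ nhds (x, z) := by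
      apply hq.continuousAt.preimage_mem_nhds
      rwa [heval]
    have hinf := hx Z R hRc hRs z hz _ hpre
    refine hinf.mono ?_
    intro n hn
    have hn' : Prod.map π (id : Z → Z) ((Prod.map T R)^[n] (x, z)) ∈ U := hn
    have hcalc : Prod.map π (id : Z → Z) ((Prod.map T R)^[n] (x, z)) =
        (Prod.map S R)^[n] (π x, z) := by
      simp only [Prod.map_iterate]
      show (π (T^[n] x), R^[n] z) = (S^[n] (π x), R^[n] z)
      rw [hsemiIt]
    show (Prod.map S R)^[n] (π x, z) ∈ U
    rwa [hcalc] at hn'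
  · intro x hfib hx
    refine h2 x (fun x' _ hπ => ?_) hx
    have : x' ∈ π ⁻¹' {π x} := hπ
    rw [hfib] at this
    exact this

end PaperFormal
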